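/- Let a, b ≥ 0 be real numbers and let f : ℝ² → ℝ be differentiable with ‖∇f(x)‖ ≤ a + b‖x‖ for all x ∈ ℝ², where ‖·‖ is the Euclidean norm. Then for every point x₀ ∈ ℝ² and every Δ > 0, the integral of |f| over the closed axis-aligned square of side length Δ centred at x₀ satisfies ∫_{Q_Δ(x₀)} |f(x)| dx ≥ Δ²·|f(x₀)| − (Δ³/√2)·(a + b‖x₀‖) − (b/2)·Δ⁴. -/

import Mathlib

open MeasureTheory

/-- **Per-cell discretization bound (paper's Proposition 6, single grid cell).**
If `f : ℝ² → ℝ` is differentiable with `‖∇f(x)‖ ≤ a + b‖x‖` everywhere, then the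
integral of `|f|` over the closed axis-aligned square of side `Δ` centred at `x₀`
is at least `Δ²|f(x₀)| − (Δ³/√2)(a + b‖x₀‖) − (b/2)Δ⁴`. -/
theorem stmt13 (a b : ℝ) (ha : 0 ≤ a) (hb : 0 ≤ b)
    (f : EuclideanSpace ℝ (Fin 2) → ℝ) (hf : Differentiable ℝ f)
    (hgrad : ∀ x, ‖gradient f x‖ ≤ a + b * ‖x‖)
    (x₀ : EuclideanSpace ℝ (Fin 2)) (Δ : ℝ) (hΔ : 0 < Δ) :
    ∫ x in {x : EuclideanSpace ℝ (Fin 2) | ∀ i, |x i - x₀ i| ≤ Δ / 2}, |f x| ≥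
      Δ ^ 2 * |f x₀| - (Δ ^ 3 / Real.sqrt 2) * (a + b * ‖x₀‖) - (b / 2) * Δ ^ 4 := by
  set Q : Set (EuclideanSpace ℝ (Fin 2)) := {x | ∀ i, |x i - x₀ i| ≤ Δ / 2} with hQdef
  have h2 : (0:ℝ) < Real.sqrt 2 := Real.sqrt_pos.2 (by norm_num)
  have hsq2 : Real.sqrt 2 * Real.sqrt 2 = 2 := Real.mul_self_sqrt (by norm_num)
  -- fderiv norm bound
  have hfd : ∀ x, ‖fderiv ℝ f x‖ ≤ a + b * ‖x‖ := by
    intro x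
    have : ‖gradient f x‖ = ‖fderiv ℝ f x‖ :=
      (InnerProductSpace.toDual ℝ _).symm.norm_map _
    rw [← this]; exact hgrad x
  -- distance bound on Q
  have hdist : ∀ x ∈ Q, ‖x - x₀‖ ≤ Δ / Real.sqrt 2 := by
    intro x hx
    have hnorm : ‖x - x₀‖ = Real.sqrt (∑ i, ‖(x - x₀) i‖ ^ 2) :=
      EuclideanSpace.norm_eq _
    rw [hnorm]
    have hsum : (∑ i, ‖(x - x₀) i‖ ^ 2) ≤ (Δ / Real.sqrt 2) ^ 2 := by
      have hterm : ∀ i, ‖(x - x₀) i‖ ^ 2 ≤ (Δ / 2) ^ 2 := by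
        intro i
        have h1 : |x i - x₀ i| ≤ Δ / 2 := hx i
        have : ‖(x - x₀) i‖ = |x i - x₀ i| := by
          simp [PiLp.sub_apply, Real.norm_eq_abs]
        rw [this]
        exact pow_le_pow_left₀ (abs_nonneg _) h1 2
      have hexp : (∑ i, ‖(x - x₀) i‖ ^ 2) = ‖(x - x₀) 0‖ ^ 2 + ‖(x - x₀) 1‖ ^ 2 :=
        Fin.sum_univ_two _
      rw [hexp]
      have h0 := hterm 0
      have h1 := hterm 1
      have : (Δ / Real.sqrt 2) ^ 2 = Δ ^ 2 / 2 := by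
        rw [div_pow, Real.sq_sqrt (by norm_num : (0:ℝ) ≤ 2)]
      rw [this]
      nlinarith
    calc Real.sqrt (∑ i, ‖(x - x₀) i‖ ^ 2) ≤ Real.sqrt ((Δ / Real.sqrt 2) ^ 2) :=
          Real.sqrt_le_sqrt hsum
      _ = Δ / Real.sqrt 2 := Real.sqrt_sq (by positivity)
  have hx₀Q : x₀ ∈ Q := fun i => by simp; positivity
  -- convexity
  have hconv : Convex ℝ Q := by
    intro x hx y hy α β hα hβ hαβ i
    have hxy : (α • x + β • y) i = α * x i + β * y i := by
      simp [PiLp.add_apply, PiLp.smul_apply, smul_eq_mul]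
    rw [hxy]
    have : α * x i + β * y i - x₀ i = α * (x i - x₀ i) + β * (y i - x₀ i) := by
      linear_combination (x₀ i) * hαβ
    rw [this]
    calc |α * (x i - x₀ i) + β * (y i - x₀ i)|
        ≤ |α * (x i - x₀ i)| + |β * (y i - x₀ i)| := abs_add_le _ _
      _ = α * |x i - x₀ i| + β * |y i - x₀ i| := by
          rw [abs_mul, abs_mul, abs_of_nonneg hα, abs_of_nonneg hβ]
      _ ≤ α * (Δ / 2) + β * (Δ / 2) := by
          gcongr
          exacts [hx i, hy i]
      _ = Δ / 2 := by rw [← add_mul, hαβ, one_mul]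
  -- M and the Lipschitz bound
  set M : ℝ := a + b * ‖x₀‖ + b * (Δ / Real.sqrt 2) with hMdef
  have hM0 : 0 ≤ M := by positivity
  have hMVT : ∀ x ∈ Q, |f x - f x₀| ≤ M * (Δ / Real.sqrt 2) := by
    intro x hx
    have hb' : ∀ y ∈ Q, ‖fderiv ℝ f y‖ ≤ M := by
      intro y hy
      calc ‖fderiv ℝ f y‖ ≤ a + b * ‖y‖ := hfd y
        _ ≤ M := by
            have : ‖y‖ ≤ ‖x₀‖ + Δ / Real.sqrt 2 := by
              calc ‖y‖ = ‖x₀ + (y - x₀)‖ := by congr 1; abel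
                _ ≤ ‖x₀‖ + ‖y - x₀‖ := norm_add_le _ _
                _ ≤ ‖x₀‖ + Δ / Real.sqrt 2 := by linarith [hdist y hy]
            rw [hMdef]
            nlinarith
    have := hconv.norm_image_sub_le_of_norm_fderiv_le
      (fun y _ => hf y) hb' hx₀Q hx
    calc |f x - f x₀| = ‖f x - f x₀‖ := rfl
      _ ≤ M * ‖x - x₀‖ := this
      _ ≤ M * (Δ / Real.sqrt 2) := by
          exact mul_le_mul_of_nonneg_left (hdist x hx) hM0
  -- pointwise lower bound
  set c : ℝ := |f x₀| - (Δ / Real.sqrt 2) * M with hcdef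
  have hpt : ∀ x ∈ Q, c ≤ |f x| := by
    intro x hx
    have h1 : |f x₀| - |f x| ≤ |f x - f x₀| := by
      have := abs_sub_abs_le_abs_sub (f x₀) (f x)
      rwa [abs_sub_comm] at this
    have := hMVT x hx
    rw [hcdef]; nlinarith
  -- Q as preimage of a box
  set lo : Fin 2 → ℝ := fun i => x₀ i - Δ / 2 with hlo
  set hi : Fin 2 → ℝ := fun i => x₀ i + Δ / 2 with hhi
  have he : ∀ (y : EuclideanSpace ℝ (Fin 2)) (i : Fin 2),
      (MeasurableEquiv.toLp 2 (Fin 2 → ℝ)).symm y i = y i := fun _ _ => rfl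
  have hQeq : Q = (MeasurableEquiv.toLp 2 (Fin 2 → ℝ)).symm ⁻¹' (Set.Icc lo hi) := by
    ext x
    simp only [hQdef, Set.mem_setOf_eq, Set.mem_preimage, Set.mem_Icc, Pi.le_def, he,
      hlo, hhi]
    constructor
    · intro h
      refine ⟨fun i => ?_, fun i => ?_⟩ <;> have := abs_le.1 (h i)
      · linarith [this.1]
      · linarith [this.2]
    · rintro ⟨h1, h2⟩ i
      rw [abs_le]
      exact ⟨by linarith [h1 i], by linarith [h2 i]⟩
  -- volume of Q
  have hvol : volume Q = ENNReal.ofReal Δ * ENNReal.ofReal Δ := by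
    rw [hQeq,
      (EuclideanSpace.volume_preserving_symm_measurableEquiv_toLp (Fin 2)).measure_preimage
        measurableSet_Icc.nullMeasurableSet]
    rw [Real.volume_Icc_pi]
    simp [hlo, hhi, Fin.prod_univ_two]
    rw [sq]
  have hvtoReal : (volume Q).toReal = Δ ^ 2 := by
    rw [hvol, ENNReal.toReal_mul, ENNReal.toReal_ofReal hΔ.le]; ring
  have hvfin : volume Q ≠ ⊤ := by rw [hvol]; exact ENNReal.mul_ne_top ENNReal.ofReal_ne_top ENNReal.ofReal_ne_top
  -- measurability, compactness, integrability
  have hclosed : IsClosed Q := by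
    have : Q = ⋂ i, {x : EuclideanSpace ℝ (Fin 2) | |x i - x₀ i| ≤ Δ / 2} := by
      ext x; simp [hQdef]
    rw [this]
    refine isClosed_iInter fun i => ?_
    have hcont : Continuous fun x : EuclideanSpace ℝ (Fin 2) => |x i - x₀ i| := by
      exact (((continuous_apply i).comp (PiLp.continuous_ofLp 2 _)).sub continuous_const).abs
    exact isClosed_le hcont continuous_const
  have hmeas : MeasurableSet Q := hclosed.measurableSet
  have hcompact : IsCompact Q := by
    refine Metric.isCompact_of_isClosed_isBounded hclosed ?_
    refine (Metric.isBounded_iff_subset_closedBall x₀).2 ⟨Δ / Real.sqrt 2, fun x hx => ?_⟩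
    rw [Metric.mem_closedBall, dist_eq_norm]
    exact hdist x hx
  have hint : IntegrableOn (fun x => |f x|) Q := by
    exact (hf.continuous.abs.continuousOn).integrableOn_compact hcompact
  have hintc : IntegrableOn (fun _ : EuclideanSpace ℝ (Fin 2) => c) Q :=
    integrableOn_const hvfin
  -- combine
  have hmono : ∫ x in Q, c ≤ ∫ x in Q, |f x| :=
    setIntegral_mono_on hintc hint hmeas hpt
  have hcint : ∫ _x in Q, c = c * Δ ^ 2 := by
    rw [setIntegral_const, Measure.real, hvtoReal, smul_eq_mul, mul_comm]
  have hfinal : c * Δ ^ 2 =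
      Δ ^ 2 * |f x₀| - (Δ ^ 3 / Real.sqrt 2) * (a + b * ‖x₀‖) - (b / 2) * Δ ^ 4 := by
    have hs : (Δ / Real.sqrt 2) = Δ * Real.sqrt 2 / 2 := by
      rw [div_eq_div_iff h2.ne' (by norm_num : (2:ℝ) ≠ 0)]
      linear_combination (-Δ) * hsq2
    rw [hcdef, hMdef, hs]
    have h3 : Δ ^ 3 / Real.sqrt 2 = Δ ^ 3 * Real.sqrt 2 / 2 := by
      rw [div_eq_div_iff h2.ne' (by norm_num : (2:ℝ) ≠ 0)]
      linear_combination (-(Δ ^ 3)) * hsq2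
    rw [h3]
    linear_combination (-(b * Δ ^ 4) / 4) * hsq2
  rw [ge_iff_le, ← hfinal, ← hcint]
  exact hmono
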